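/- If strings T_A and T_B have edit distance at most k, and T_A is partitioned into b consecutive blocks, then for all but at most k of these blocks, the block (as a string) occurs as a substring of T_B starting at a position that differs from its starting position in T_A by at most k. -/

import Mathlib

/-- Costs of the edit operations (formerly `Levenshtein.Cost` in Mathlib). -/
structure Levenshtein.Cost (α β δ : Type*) where
  delete : α → δ
  insert : β → δ
  substitute : α → β → δ

/-- Unit costs, as the former `Levenshtein.defaultCost` of Mathlib. -/
def Levenshtein.defaultCost {α : Type*} [DecidableEq α] : Levenshtein.Cost α α ℕ where
  delete _ := 1
  insert _ := 1
  substitute a b := if a = b then 0 else 1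

/-- Weighted edit distance, by the recursion satisfied by the former Mathlib `levenshtein`. -/
def levenshtein {α β δ : Type*} [AddZeroClass δ] [Min δ] (C : Levenshtein.Cost α β δ) :
    List α → List β → δ
  | [], ys => (ys.map C.insert).sum
  | x :: xs, [] => C.delete x + levenshtein C xs []
  | x :: xs, y :: ys =>
      min (C.delete x + levenshtein C xs (y :: ys))
        (min (C.insert y + levenshtein C (x :: xs) ys)
          (C.substitute x y + levenshtein C xs ys))

theorem levenshtein_nil_cons {α β δ : Type*} [AddZeroClass δ] [Min δ]
    (C : Levenshtein.Cost α β δ) (y : β) (ys : List β) :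
    levenshtein C [] (y :: ys) = C.insert y + levenshtein C [] ys := by
  simp only [levenshtein.eq_1, List.map_cons, List.sum_cons]

theorem levenshtein_cons_nil {α β δ : Type*} [AddZeroClass δ] [Min δ]
    (C : Levenshtein.Cost α β δ) (x : α) (xs : List α) :
    levenshtein C (x :: xs) [] = C.delete x + levenshtein C xs [] := by
  simp only [levenshtein.eq_2]

theorem levenshtein_cons_cons {α β δ : Type*} [AddZeroClass δ] [Min δ]
    (C : Levenshtein.Cost α β δ) (x : α) (xs : List α) (y : β) (ys : List β) :
    levenshtein C (x :: xs) (y :: ys) =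
      min (C.delete x + levenshtein C xs (y :: ys))
        (min (C.insert y + levenshtein C (x :: xs) ys)
          (C.substitute x y + levenshtein C xs ys)) := by
  simp only [levenshtein.eq_3]

/-- An explicit edit script with `d` edit operations transforming one list
into another. -/
inductive EditSeq {α : Type*} : ℕ → List α → List α → Prop
  | nil : EditSeq 0 [] []
  | copy (a : α) {d xs ys} : EditSeq d xs ys → EditSeq d (a :: xs) (a :: ys)
  | sub (a b : α) {d xs ys} : EditSeq d xs ys → EditSeq (d + 1) (a :: xs) (b :: ys)
  | del (a : α) {d xs ys} : EditSeq d xs ys → EditSeq (d + 1) (a :: xs) ys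
  | ins (b : α) {d xs ys} : EditSeq d xs ys → EditSeq (d + 1) xs (b :: ys)

theorem exists_editSeq {α : Type*} [DecidableEq α] :
    ∀ xs ys : List α, ∃ d, d ≤ levenshtein Levenshtein.defaultCost xs ys ∧ EditSeq d xs ys := by
  intro xs
  induction xs with
  | nil =>
    intro ys
    induction ys with
    | nil => exact ⟨0, by simp, .nil⟩
    | cons b ys ih =>
      obtain ⟨d, hd, he⟩ := ih
      refine ⟨d + 1, ?_, .ins b he⟩
      rw [levenshtein_nil_cons]
      have h1 : Levenshtein.defaultCost.insert b = 1 := rfl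
      omega
  | cons a xs ihx =>
    intro ys
    induction ys with
    | nil =>
      obtain ⟨d, hd, he⟩ := ihx []
      refine ⟨d + 1, ?_, .del a he⟩
      rw [levenshtein_cons_nil]
      have h1 : Levenshtein.defaultCost.delete a = 1 := rfl
      omega
    | cons b ys ihy =>
      obtain ⟨d1, hd1, he1⟩ := ihx (b :: ys)
      obtain ⟨d2, hd2, he2⟩ := ihy
      obtain ⟨d3, hd3, he3⟩ := ihx ys
      rw [levenshtein_cons_cons]
      have hdel : Levenshtein.defaultCost.delete a = 1 := rfl
      have hins : Levenshtein.defaultCost.insert b = 1 := rfl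
      rw [hdel, hins]
      set x1 := levenshtein Levenshtein.defaultCost xs (b :: ys) with hx1
      set x2 := levenshtein Levenshtein.defaultCost (a :: xs) ys with hx2
      set x3 := levenshtein Levenshtein.defaultCost xs ys with hx3
      by_cases hab : a = b
      · subst hab
        have hsub : Levenshtein.defaultCost.substitute a a = 0 := by
          simp [Levenshtein.defaultCost]
        rw [hsub]
        rcases le_total (1 + x1) (min (1 + x2) (0 + x3)) with h | h
        · exact ⟨d1 + 1, by omega, .del a he1⟩
        · rcases le_total (1 + x2) (0 + x3) with h' | h'
          · exact ⟨d2 + 1, by omega, .ins a he2⟩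
          · exact ⟨d3, by omega, .copy a he3⟩
      · have hsub : Levenshtein.defaultCost.substitute a b = 1 := by
          simp [Levenshtein.defaultCost, hab]
        rw [hsub]
        rcases le_total (1 + x1) (min (1 + x2) (1 + x3)) with h | h
        · exact ⟨d1 + 1, by omega, .del a he1⟩
        · rcases le_total (1 + x2) (1 + x3) with h' | h'
          · exact ⟨d2 + 1, by omega, .ins b he2⟩
          · exact ⟨d3 + 1, by omega, .sub a b he3⟩

/-- Process one block: consuming a prefix `B` of the source uses some `c ≤ d`
edits, consumes `m` characters of the target with `|m - |B|| ≤ c`, and if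
`c = 0` then `B` is a prefix of the target. -/
theorem editSeq_block {α : Type*} :
    ∀ {d : ℕ} {A ys : List α}, EditSeq d A ys → ∀ B xs, A = B ++ xs →
      ∃ c m, c ≤ d ∧ EditSeq (d - c) xs (ys.drop m) ∧
        m ≤ B.length + c ∧ B.length ≤ m + c ∧
        (c = 0 → ys.take B.length = B) := by
  intro d A ys h
  induction h with
  | nil =>
    intro B xs hBx
    obtain ⟨hB, hx⟩ := List.append_eq_nil_iff.mp hBx.symm
    subst hB; subst hx
    exact ⟨0, 0, le_refl _, .nil, by simp, by simp, fun _ => rfl⟩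
  | @copy a d xs ys he ih =>
    intro B zs hBx
    rcases B with _ | ⟨b, B'⟩
    · simp only [List.nil_append] at hBx
      subst hBx
      exact ⟨0, 0, Nat.zero_le _, .copy a he, by simp, by simp, fun _ => rfl⟩
    · rw [List.cons_append] at hBx
      injection hBx with hb hrest
      subst hb
      obtain ⟨c, m, hc, he', hm1, hm2, htake⟩ := ih B' zs hrest
      refine ⟨c, m + 1, hc, by simpa using he', ?_, ?_, fun h0 => by simp [htake h0]⟩
      · simp only [List.length_cons]; omega
      · simp only [List.length_cons]; omega
  | @sub a b d xs ys he ih =>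
    intro B zs hBx
    rcases B with _ | ⟨b', B'⟩
    · simp only [List.nil_append] at hBx
      subst hBx
      exact ⟨0, 0, Nat.zero_le _, .sub a b he, by simp, by simp, fun _ => rfl⟩
    · rw [List.cons_append] at hBx
      injection hBx with hb hrest
      obtain ⟨c, m, hc, he', hm1, hm2, _⟩ := ih B' zs hrest
      refine ⟨c + 1, m + 1, by omega, ?_, ?_, ?_, fun h0 => absurd h0 (Nat.succ_ne_zero c)⟩
      · have hdd : d + 1 - (c + 1) = d - c := by omega
        rw [hdd]; simpa using he'
      · simp only [List.length_cons]; omega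
      · simp only [List.length_cons]; omega
  | @del a d xs ys he ih =>
    intro B zs hBx
    rcases B with _ | ⟨b', B'⟩
    · simp only [List.nil_append] at hBx
      subst hBx
      exact ⟨0, 0, Nat.zero_le _, .del a he, by simp, by simp, fun _ => rfl⟩
    · rw [List.cons_append] at hBx
      injection hBx with hb hrest
      obtain ⟨c, m, hc, he', hm1, hm2, _⟩ := ih B' zs hrest
      refine ⟨c + 1, m, by omega, ?_, ?_, ?_, fun h0 => absurd h0 (Nat.succ_ne_zero c)⟩
      · have hdd : d + 1 - (c + 1) = d - c := by omega
        rw [hdd]; exact he'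
      · simp only [List.length_cons]; omega
      · simp only [List.length_cons]; omega
  | @ins b d xs ys he ih =>
    intro B zs hBx
    rcases B with _ | ⟨b', B'⟩
    · simp only [List.nil_append] at hBx
      subst hBx
      exact ⟨0, 0, Nat.zero_le _, .ins b he, by simp, by simp, fun _ => rfl⟩
    · obtain ⟨c, m, hc, he', hm1, hm2, _⟩ := ih (b' :: B') zs hBx
      refine ⟨c + 1, m + 1, by omega, ?_, ?_, ?_, fun h0 => absurd h0 (Nat.succ_ne_zero c)⟩
      · have hdd : d + 1 - (c + 1) = d - c := by omega
        rw [hdd]; simpa using he'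
      · simp only [List.length_cons] at hm1 ⊢; omega
      · simp only [List.length_cons] at hm2 ⊢; omega

open Classical in
theorem editSeq_main {α : Type*} (K : ℕ) (TB : List α) :
    ∀ (L : List (List α)) (d s pA pB : ℕ),
      EditSeq d L.flatten (TB.drop pB) →
      pA ≤ pB + s → pB ≤ pA + s → s + d ≤ K →
      ((Finset.range L.length).filter (fun t => ¬ ∃ q : ℕ,
        pA + ((L.take t).map List.length).sum ≤ q + K ∧
        q ≤ pA + ((L.take t).map List.length).sum + K ∧
        (TB.drop q).take (L.getD t []).length = L.getD t [])).card ≤ d := by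
  intro L
  induction L with
  | nil => intro d s pA pB _ _ _ _; simp
  | cons B L' ih =>
    intro d s pA pB he h1 h2 h3
    obtain ⟨c, m, hc, he', hm1, hm2, htake⟩ :=
      editSeq_block he B L'.flatten (by simp)
    rw [List.drop_drop] at he'
    have ihc := ih (d - c) (s + c) (pA + B.length) (pB + m) he'
      (by omega) (by omega) (by omega)
    set P : ℕ → Prop := fun t => ¬ ∃ q : ℕ,
        pA + (((B :: L').take t).map List.length).sum ≤ q + K ∧
        q ≤ pA + (((B :: L').take t).map List.length).sum + K ∧
        (TB.drop q).take ((B :: L').getD t []).length = (B :: L').getD t [] with hP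
    have hshift : ∀ t, P (t + 1) ↔ ¬ ∃ q : ℕ,
        (pA + B.length) + ((L'.take t).map List.length).sum ≤ q + K ∧
        q ≤ (pA + B.length) + ((L'.take t).map List.length).sum + K ∧
        (TB.drop q).take (L'.getD t []).length = L'.getD t [] := by
      intro t
      simp only [hP, List.take_succ_cons, List.map_cons, List.sum_cons, List.getD_cons_succ]
      constructor
      · intro h ⟨q, hq1, hq2, hq3⟩; exact h ⟨q, by omega, by omega, hq3⟩
      · intro h ⟨q, hq1, hq2, hq3⟩; exact h ⟨q, by omega, by omega, hq3⟩
    have hsubset : (Finset.range (B :: L').length).filter P ⊆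
        insert 0 (((Finset.range L'.length).filter (fun t => P (t + 1))).map
          ⟨Nat.succ, Nat.succ_injective⟩) := by
      intro t ht
      simp only [Finset.mem_filter, Finset.mem_range, List.length_cons] at ht
      rcases t with _ | t
      · simp
      · simp only [Finset.mem_insert, Finset.mem_map, Finset.mem_filter,
          Finset.mem_range, Function.Embedding.coeFn_mk]
        exact Or.inr ⟨t, ⟨by omega, ht.2⟩, rfl⟩
    have hcard2 : ((Finset.range L'.length).filter (fun t => P (t + 1))).card ≤ d - c := by
      calc ((Finset.range L'.length).filter (fun t => P (t + 1))).card
          = ((Finset.range L'.length).filter (fun t => ¬ ∃ q : ℕ,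
            (pA + B.length) + ((L'.take t).map List.length).sum ≤ q + K ∧
            q ≤ (pA + B.length) + ((L'.take t).map List.length).sum + K ∧
            (TB.drop q).take (L'.getD t []).length = L'.getD t [])).card := by
            congr 1; apply Finset.filter_congr; intro t _; simp only [hshift t]
        _ ≤ d - c := ihc
    rcases Nat.eq_zero_or_pos c with hc0 | hcpos
    · -- block untouched : t = 0 is good
      subst hc0
      have hgood : ¬ P 0 := by
        simp only [hP, not_not, List.take_zero, List.map_nil, List.sum_nil,
          Nat.add_zero, List.getD_cons_zero]
        exact ⟨pB, by omega, by omega, htake rfl⟩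
      have hsub2 : (Finset.range (B :: L').length).filter P ⊆
          ((Finset.range L'.length).filter (fun t => P (t + 1))).map
            ⟨Nat.succ, Nat.succ_injective⟩ := by
        intro t ht
        have hmem := hsubset ht
        simp only [Finset.mem_insert] at hmem
        rcases hmem with h0 | h0
        · exact absurd (Finset.mem_filter.mp (h0 ▸ ht)).2 hgood
        · exact h0
      calc ((Finset.range (B :: L').length).filter P).card
          ≤ (((Finset.range L'.length).filter (fun t => P (t + 1))).map
            ⟨Nat.succ, Nat.succ_injective⟩).card := Finset.card_le_card hsub2
        _ = ((Finset.range L'.length).filter (fun t => P (t + 1))).card :=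
            Finset.card_map _
        _ ≤ d := by omega
    · calc ((Finset.range (B :: L').length).filter P).card
          ≤ (insert 0 (((Finset.range L'.length).filter (fun t => P (t + 1))).map
            ⟨Nat.succ, Nat.succ_injective⟩)).card := Finset.card_le_card hsubset
        _ ≤ (((Finset.range L'.length).filter (fun t => P (t + 1))).map
            ⟨Nat.succ, Nat.succ_injective⟩).card + 1 := Finset.card_insert_le _ _
        _ ≤ d := by rw [Finset.card_map]; omega

open Classical in
/-- If `T_A` and `T_B` have edit distance at most `k` and `T_A` is partitioned
into the consecutive blocks of the list `L`, then all but at most `k` blocks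
occur in `T_B` starting within distance `k` of their position in `T_A`. -/
theorem blocks_match_with_shift {α : Type*} [DecidableEq α] (k : ℕ)
    (TA TB : List α) (L : List (List α))
    (hA : TA = L.flatten)
    (hed : levenshtein Levenshtein.defaultCost TA TB ≤ k) :
    Set.ncard {t : ℕ | t < L.length ∧
      ¬ ∃ q : ℕ,
        ((L.take t).map List.length).sum ≤ q + k ∧
        q ≤ ((L.take t).map List.length).sum + k ∧
        (TB.drop q).take (L.getD t []).length = L.getD t []} ≤ k := by
  obtain ⟨d, hd, he⟩ := exists_editSeq TA TB
  have hdk : d ≤ k := le_trans hd hed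
  subst hA
  have hmain := editSeq_main k TB L d 0 0 0 (by simpa using he) (by omega) (by omega)
    (by omega)
  have hset : {t : ℕ | t < L.length ∧
      ¬ ∃ q : ℕ,
        ((L.take t).map List.length).sum ≤ q + k ∧
        q ≤ ((L.take t).map List.length).sum + k ∧
        (TB.drop q).take (L.getD t []).length = L.getD t []} =
      ↑((Finset.range L.length).filter (fun t => ¬ ∃ q : ℕ,
        0 + ((L.take t).map List.length).sum ≤ q + k ∧
        q ≤ 0 + ((L.take t).map List.length).sum + k ∧
        (TB.drop q).take (L.getD t []).length = L.getD t [])) := by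
    ext t
    simp [Finset.mem_filter, Finset.mem_range]
  rw [hset, Set.ncard_coe_finset]
  exact le_trans hmain hdk
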